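/- Let (X,d) be a complete metric space, let f : X → (−∞,∞] be lower semicontinuous, and let x̄ be a point with f(x̄) finite at which the slope is zero: |∇f|(x̄) = 0. If the singleton set {x̄} is identifiable for f at x̄, then x̄ is a sharp local minimizer: there exists ε > 0 such that f(x) ≥ f(x̄) + ε·d(x,x̄) for all x near x̄. -/

import Mathlib

open Filter Topology
open scoped ENNReal NNReal

/-- The slope `|∇f|(x)`: the infimum of all `δ > 0` such that `x` is a local minimizer of
`f + δ·d(·,x)`; it equals `∞` at points where `f x = ⊤`. -/
noncomputable def slopeM {X : Type*} [MetricSpace X] (f : X → EReal) (x : X) : ℝ≥0∞ :=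
  if f x = ⊤ then ⊤
  else sInf {δ : ℝ≥0∞ | ∃ c : ℝ, 0 < c ∧ δ = ENNReal.ofReal c ∧
    ∀ᶠ z in 𝓝 x, f x ≤ f z + ((c * dist z x : ℝ) : EReal)}

/-- The modulus of identifiability: `liminf_{x → xbar, x ∉ M, f(x) → f(xbar)} |∇f|(x)`. -/
noncomputable def identModulus {X : Type*} [MetricSpace X] (f : X → EReal) (M : Set X)
    (xbar : X) : ℝ≥0∞ :=
  Filter.liminf (slopeM f) (𝓝[Mᶜ] xbar ⊓ Filter.comap f (𝓝 (f xbar)))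

/-- `M` is an identifiable set for `f` at `xbar`: it is closed, contains `xbar`, and the
modulus of identifiability is strictly positive. -/
def Identifiable {X : Type*} [MetricSpace X] (f : X → EReal) (M : Set X) (xbar : X) : Prop :=
  IsClosed M ∧ xbar ∈ M ∧ 0 < identModulus f M xbar

theorem my_ekeland {Y : Type*} [MetricSpace Y] [CompleteSpace Y] (g : Y → ℝ)
    (hg : LowerSemicontinuous g) (B : ℝ) (hB : ∀ w, B ≤ g w)
    (lam : ℝ) (hlam : 0 < lam) (x0 : Y) :
    ∃ y : Y, g y + lam * dist y x0 ≤ g x0 ∧ ∀ w, g y ≤ g w + lam * dist w y := by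
  classical
  set S : Y → Set Y := fun x => {w | g w + lam * dist w x ≤ g x} with hS
  have hself : ∀ x, x ∈ S x := by intro x; simp [hS]
  have htrans : ∀ x x', x' ∈ S x → S x' ⊆ S x := by
    intro x x' hx' w hw
    simp only [hS, Set.mem_setOf_eq] at *
    have := dist_triangle w x' x
    nlinarith [hw, hx']
  have hclosed : ∀ x, IsClosed (S x) := by
    intro x
    have : LowerSemicontinuous fun w => g w + lam * dist w x :=
      hg.add ((continuous_const.mul ((continuous_id.dist continuous_const))).lowerSemicontinuous)
    exact this.isClosed_preimage (g x)
  have key : ∀ n : ℕ, ∀ x : Y, ∃ x', x' ∈ S x ∧ g x' < sInf (g '' S x) + (1/2)^n := by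
    intro n x
    obtain ⟨a, ⟨x', hx', rfl⟩, ha⟩ :=
      Real.lt_sInf_add_pos (Set.Nonempty.image g ⟨x, hself x⟩)
        (pow_pos (by norm_num : (0:ℝ) < 1/2) n)
    exact ⟨x', hx', ha⟩
  let u : ℕ → Y := fun n => Nat.rec x0 (fun n x => (key n x).choose) n
  have hu0 : u 0 = x0 := rfl
  have huS : ∀ n, u (n+1) ∈ S (u n) := fun n => (key n (u n)).choose_spec.1
  have huval : ∀ n, g (u (n+1)) < sInf (g '' S (u n)) + (1/2)^n :=
    fun n => (key n (u n)).choose_spec.2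
  have hmem : ∀ n m, n ≤ m → u m ∈ S (u n) := by
    intro n m hnm
    induction m with
    | zero => exact Nat.le_zero.mp hnm ▸ hself _
    | succ m ih =>
      rcases Nat.lt_or_ge n (m+1) with h | h
      · exact htrans _ _ (ih (Nat.lt_succ_iff.mp h)) (huS m)
      · have : n = m + 1 := le_antisymm hnm h
        exact this ▸ hself _
  have hgle : ∀ n m, n ≤ m → lam * dist (u m) (u n) ≤ g (u n) - g (u m) := by
    intro n m hnm
    have := hmem n m hnm
    simp only [hS, Set.mem_setOf_eq] at this
    linarith
  have hganti : ∀ n m, n ≤ m → g (u m) ≤ g (u n) := by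
    intro n m hnm
    have := hgle n m hnm
    nlinarith [dist_nonneg (x := u m) (y := u n)]
  have hbdd : BddBelow (Set.range fun n => g (u n)) := ⟨B, by rintro _ ⟨n, rfl⟩; exact hB _⟩
  set L : ℝ := ⨅ n, g (u n) with hL
  have hLle : ∀ n, L ≤ g (u n) := fun n => ciInf_le hbdd n
  have hgtend : Tendsto (fun n => g (u n)) atTop (𝓝 L) :=
    tendsto_atTop_ciInf (fun n m hnm => hganti n m hnm) hbdd
  have hcauchy : CauchySeq u := by
    apply cauchySeq_of_le_tendsto_0 (fun n => 2 * (g (u n) - L) / lam)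
    · intro n m N hn hm
      have h1 : dist (u n) (u N) ≤ (g (u N) - L) / lam := by
        rw [le_div_iff₀ hlam]
        have h := hgle N n hn
        have := hLle n
        linarith [dist_comm (u n) (u N)]
      have h2 : dist (u m) (u N) ≤ (g (u N) - L) / lam := by
        rw [le_div_iff₀ hlam]
        have h := hgle N m hm
        have := hLle m
        linarith [dist_comm (u m) (u N)]
      calc dist (u n) (u m) ≤ dist (u n) (u N) + dist (u N) (u m) := dist_triangle _ _ _
        _ ≤ (g (u N) - L) / lam + (g (u N) - L) / lam := by
            rw [dist_comm (u N)]; exact add_le_add h1 h2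
        _ = 2 * (g (u N) - L) / lam := by ring
    · have : Tendsto (fun n => g (u n) - L) atTop (𝓝 0) := by
        have hsub : Tendsto (fun n => g (u n) - L) atTop (𝓝 (L - L)) :=
          hgtend.sub tendsto_const_nhds
        rw [sub_self] at hsub
        exact hsub
      have := (this.const_mul 2).div_const lam
      simpa using this
  obtain ⟨y, hy⟩ := cauchySeq_tendsto_of_complete hcauchy
  have hyS : ∀ n, y ∈ S (u n) := by
    intro n
    refine (hclosed (u n)).mem_of_tendsto hy ?_
    filter_upwards [eventually_ge_atTop n] with m hm
    exact hmem n m hm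
  refine ⟨y, by simpa [hS, hu0] using hyS 0, ?_⟩
  intro w
  by_contra hcon
  push_neg at hcon
  have hwS : ∀ n, w ∈ S (u n) := by
    intro n
    have hy' := hyS n
    simp only [hS, Set.mem_setOf_eq] at *
    have := dist_triangle w y (u n)
    nlinarith
  have hkey : ∀ n : ℕ, g y ≤ g w + (1/2)^n := by
    intro n
    have h1 : g y ≤ g (u (n+1)) := by
      have := hyS (n+1)
      simp only [hS, Set.mem_setOf_eq] at this
      nlinarith [dist_nonneg (x := y) (y := u (n+1))]
    have h2 : sInf (g '' S (u n)) ≤ g w :=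
      csInf_le ⟨B, by rintro _ ⟨v, _, rfl⟩; exact hB v⟩ ⟨w, hwS n, rfl⟩
    have := huval n
    linarith
  have hgyw : g y ≤ g w := by
    by_contra h
    push_neg at h
    obtain ⟨n, hn⟩ := exists_pow_lt_of_lt_one (sub_pos.mpr h) (by norm_num : (1:ℝ)/2 < 1)
    have := hkey n
    linarith
  nlinarith [dist_nonneg (x := w) (y := y)]

theorem ekeland_step {X : Type*} [MetricSpace X] [CompleteSpace X] (f : X → EReal)
    (hlsc : LowerSemicontinuous f) (hbot : ∀ z, f z ≠ ⊥) (xbar : X) (hfin : f xbar ≠ ⊤)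
    (ρ c r0 : ℝ) (hρ : 0 < ρ) (hρ1 : ρ ≤ 1) (hc : 0 < c) (hcρ : c < ρ/16) (hr0 : 0 < r0)
    (hnear : ∀ w, dist w xbar < r0 → f xbar ≤ f w + ((c * dist w xbar : ℝ) : EReal))
    (z : X) (ht0 : 0 < dist z xbar) (ht1 : dist z xbar < r0/2) (ht2 : dist z xbar ≤ 1)
    (hz : f z < f xbar + ((ρ/16 * dist z xbar : ℝ) : EReal)) :
    ∃ y : X, y ≠ xbar ∧ dist y xbar ≤ 2 * dist z xbar ∧
      slopeM f y ≤ ENNReal.ofReal (ρ/2) ∧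
      (((f xbar).toReal - 2*c*dist z xbar : ℝ) : EReal) ≤ f y ∧
      f y ≤ (((f xbar).toReal + ρ/16*dist z xbar : ℝ) : EReal) := by
  classical
  set t := dist z xbar with htdef
  set F := (f xbar).toReal with hFdef
  have hfx : f xbar = (F : EReal) := (EReal.coe_toReal hfin (hbot xbar)).symm
  -- f z is finite
  have hfztop : f z ≠ ⊤ := by
    intro h
    rw [h, hfx, ← EReal.coe_add] at hz
    exact not_top_lt hz
  set Fz := (f z).toReal with hFzdef
  have hfz : f z = (Fz : EReal) := (EReal.coe_toReal hfztop (hbot z)).symm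
  have hFz : Fz < F + ρ/16 * t := by
    rw [hfz, hfx, ← EReal.coe_add, EReal.coe_lt_coe_iff] at hz
    exact hz
  set C : ℝ := F + 1 with hCdef
  have hρt : ρ/16 * t < 1 := by nlinarith
  have hFzC : Fz < C := by simp only [hCdef]; linarith
  set B : ℝ := F - 2*c*t with hBdef
  have hBC : B ≤ C := by simp only [hBdef, hCdef]; nlinarith
  -- lower bound for f on the ball
  have hlowf : ∀ w, dist w xbar ≤ 2*t → ((B : ℝ) : EReal) ≤ f w := by
    intro w hw
    by_cases hwt : f w = ⊤
    · rw [hwt]; exact le_top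
    have hfw : f w = ((f w).toReal : EReal) := (EReal.coe_toReal hwt (hbot w)).symm
    have h1 := hnear w (by linarith)
    rw [hfx, hfw, ← EReal.coe_add, EReal.coe_le_coe_iff] at h1
    rw [hfw, EReal.coe_le_coe_iff]
    have hd : dist w xbar ≤ 2*t := hw
    have hd0 : 0 ≤ dist w xbar := dist_nonneg
    simp only [hBdef]
    nlinarith
  set Y : Set X := Metric.closedBall xbar (2*t) with hYdef
  have hYclosed : IsClosed Y := Metric.isClosed_closedBall
  have : CompleteSpace Y := hYclosed.completeSpace_coe
  set g : Y → ℝ := fun w => (min (f w.1) ((C : ℝ) : EReal)).toReal with hgdef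
  have hmem2t : ∀ w : Y, dist w.1 xbar ≤ 2*t := fun w => Metric.mem_closedBall.mp w.2
  have hminbot : ∀ w : Y, min (f w.1) ((C : ℝ) : EReal) ≠ ⊥ := by
    intro w
    simp [min_eq_iff, hbot w.1]
  have hmintop : ∀ w : Y, min (f w.1) ((C : ℝ) : EReal) ≠ ⊤ :=
    fun w => ne_top_of_le_ne_top (EReal.coe_ne_top C) (min_le_right _ _)
  have hgB : ∀ w : Y, B ≤ g w := by
    intro w
    have h1 : ((B:ℝ) : EReal) ≤ min (f w.1) ((C : ℝ) : EReal) :=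
      le_min (hlowf w.1 (hmem2t w)) (by exact_mod_cast hBC)
    have := EReal.toReal_le_toReal h1 (EReal.coe_ne_bot B) (hmintop w)
    rwa [EReal.toReal_coe] at this
  have hgC : ∀ w : Y, g w ≤ C := by
    intro w
    have := EReal.toReal_le_toReal (min_le_right (f w.1) ((C:ℝ):EReal)) (hminbot w)
      (EReal.coe_ne_top C)
    rwa [EReal.toReal_coe] at this
  -- lower semicontinuity of g
  have hglsc : LowerSemicontinuous g := by
    intro w a ha
    have hmfin : (min (f w.1) ((C : ℝ) : EReal)) = (((min (f w.1) ((C:ℝ):EReal)).toReal : ℝ) : EReal) :=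
      (EReal.coe_toReal (hmintop w) (hminbot w)).symm
    have haE : (a : EReal) < min (f w.1) ((C : ℝ) : EReal) := by
      rw [hmfin, EReal.coe_lt_coe_iff]; exact ha
    have haf : (a : EReal) < f w.1 := lt_min_iff.mp haE |>.1
    have haC : a < C := by
      have := lt_min_iff.mp haE |>.2
      exact EReal.coe_lt_coe_iff.mp this
    have hflsc : LowerSemicontinuous fun w : Y => f w.1 :=
      LowerSemicontinuous.comp hlsc continuous_subtype_val
    filter_upwards [hflsc w a haf] with v hv
    have hvmin : (a : EReal) < min (f v.1) ((C : ℝ) : EReal) :=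
      lt_min hv (EReal.coe_lt_coe_iff.mpr haC)
    have := EReal.toReal_le_toReal hvmin.le (EReal.coe_ne_bot a) (hmintop v)
    rw [EReal.toReal_coe] at this
    rcases lt_or_eq_of_le this with h | h
    · exact h
    · exfalso
      have : (a : EReal) = min (f v.1) ((C:ℝ):EReal) := by
        conv_rhs => rw [(EReal.coe_toReal (hmintop v) (hminbot v)).symm]
        exact_mod_cast congrArg (fun x : ℝ => (x : EReal)) h
      exact absurd (this ▸ hvmin) (lt_irrefl _)
  -- apply Ekeland
  have hzY : z ∈ Y := by
    simp only [hYdef, Metric.mem_closedBall]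
    linarith
  obtain ⟨yy, hy1, hymin⟩ := my_ekeland g hglsc B hgB (ρ/2) (by linarith) ⟨z, hzY⟩
  set y : X := yy.1 with hydef
  have hgz : g ⟨z, hzY⟩ = Fz := by
    simp only [hgdef]
    rw [hfz, min_eq_left (by exact_mod_cast hFzC.le), EReal.toReal_coe]
  -- f y is finite with value g yy
  have hgyFz : g yy ≤ Fz := by
    have := hy1
    rw [hgz] at this
    nlinarith [dist_nonneg (x := yy) (y := (⟨z, hzY⟩ : Y)), mul_nonneg (by linarith : (0:ℝ) ≤ ρ/2) (dist_nonneg (x := yy) (y := (⟨z, hzY⟩ : Y)))]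
  have hminy : min (f y) ((C:ℝ):EReal) = f y := by
    rcases min_cases (f y) ((C:ℝ):EReal) with ⟨h, _⟩ | ⟨h, hle⟩
    · exact h
    · -- min = C, so g yy = C, contradiction with g yy ≤ Fz < C
      exfalso
      have : g yy = C := by simp only [hgdef, hydef] at *; rw [h, EReal.toReal_coe]
      linarith
  have hfytop : f y ≠ ⊤ := hminy ▸ hmintop yy
  have hfy : f y = ((g yy : ℝ) : EReal) := by
    simp only [hgdef]
    rw [hminy, EReal.coe_toReal hfytop (hbot y)]
  -- distance estimates
  have hdyz : dist y z < t/2 := by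
    have h1 : (ρ/2) * dist yy (⟨z, hzY⟩ : Y) ≤ Fz - g yy := by rw [hgz] at hy1; linarith
    have h2 : B ≤ g yy := hgB yy
    have h3 : dist yy (⟨z, hzY⟩ : Y) = dist y z := Subtype.dist_eq yy ⟨z, hzY⟩
    rw [h3] at h1
    nlinarith [dist_nonneg (x := y) (y := z)]
  have hdyx_lt : dist y xbar < 3/2 * t := by
    have := dist_triangle y z xbar
    rw [← htdef] at this
    linarith
  have hdyx_gt : t/2 < dist y xbar := by
    have := dist_triangle z y xbar
    have h4 : dist z y = dist y z := dist_comm z y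
    linarith
  have hyne : y ≠ xbar := by
    intro h
    rw [h, dist_self] at hdyx_gt
    linarith
  -- slope bound
  have hslope : ∀ᶠ w in 𝓝 y, f y ≤ f w + ((ρ/2 * dist w y : ℝ) : EReal) := by
    rw [Metric.eventually_nhds_iff]
    refine ⟨2*t - dist y xbar, by linarith, fun w hw => ?_⟩
    have hwY : w ∈ Y := by
      simp only [hYdef, Metric.mem_closedBall]
      have := dist_triangle w y xbar
      linarith
    have hm := hymin ⟨w, hwY⟩
    rw [Subtype.dist_eq ⟨w, hwY⟩ yy] at hm
    by_cases hwt : f w = ⊤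
    · rw [hwt, EReal.top_add_of_ne_bot (EReal.coe_ne_bot _)]
      exact le_top
    have hfw : f w = ((f w).toReal : EReal) := (EReal.coe_toReal hwt (hbot w)).symm
    have hgw : g ⟨w, hwY⟩ ≤ (f w).toReal := by
      have := EReal.toReal_le_toReal (min_le_left (f w) ((C:ℝ):EReal)) (hminbot ⟨w, hwY⟩) hwt
      exact this
    rw [hfy, hfw, ← EReal.coe_add, EReal.coe_le_coe_iff]
    have : (⟨w, hwY⟩ : Y).1 = w := rfl
    linarith [hm]
  have hslopeb : slopeM f y ≤ ENNReal.ofReal (ρ/2) := by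
    rw [slopeM, if_neg hfytop]
    exact sInf_le ⟨ρ/2, by linarith, rfl, hslope⟩
  refine ⟨y, hyne, by linarith, hslopeb, ?_, ?_⟩
  · rw [hfy, EReal.coe_le_coe_iff]
    have := hgB yy
    simp only [hBdef] at this
    linarith
  · rw [hfy, EReal.coe_le_coe_iff]
    linarith

/-- Sharp minimizers: if `{xbar}` is identifiable and the slope vanishes at `xbar`,
then `xbar` is a sharp local minimizer. -/
theorem sharp_minimizer_of_identifiable_singleton {X : Type*} [MetricSpace X] [CompleteSpace X]
    (f : X → EReal) (hlsc : LowerSemicontinuous f) (hbot : ∀ z, f z ≠ ⊥)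
    (xbar : X) (hfin : f xbar ≠ ⊤) (hslope : slopeM f xbar = 0)
    (hsing : Identifiable f {xbar} xbar) :
    ∃ ε : ℝ, 0 < ε ∧ ∀ᶠ z in 𝓝 xbar, f xbar + ((ε * dist z xbar : ℝ) : EReal) ≤ f z := by
  classical
  obtain ⟨-, -, hκ⟩ := hsing
  obtain ⟨n₀, hn₀⟩ := ENNReal.exists_inv_nat_lt hκ.ne'
  set ρ : ℝ := ((n₀ + 1 : ℕ) : ℝ)⁻¹ with hρdef
  have hρpos : 0 < ρ := by positivity
  have hρ1 : ρ ≤ 1 := by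
    rw [hρdef]
    rw [inv_le_one_iff₀]
    right
    exact_mod_cast Nat.succ_le_succ (Nat.zero_le n₀)
  have hρκ : ENNReal.ofReal ρ < identModulus f {xbar} xbar := by
    refine lt_of_le_of_lt ?_ hn₀
    rw [hρdef, ENNReal.ofReal_inv_of_pos (by positivity), ENNReal.ofReal_natCast]
    gcongr
    exact_mod_cast Nat.le_succ n₀
  -- extract c from the zero slope
  rw [slopeM, if_neg hfin] at hslope
  have hlt : sInf {δ : ℝ≥0∞ | ∃ c : ℝ, 0 < c ∧ δ = ENNReal.ofReal c ∧
      ∀ᶠ z in 𝓝 xbar, f xbar ≤ f z + ((c * dist z xbar : ℝ) : EReal)}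
      < ENNReal.ofReal (ρ/16) := by
    rw [hslope]
    exact ENNReal.ofReal_pos.mpr (by linarith)
  obtain ⟨δ, hδmem, hδlt⟩ := sInf_lt_iff.mp hlt
  obtain ⟨c, hc, rfl, hev⟩ := hδmem
  have hcρ : c < ρ/16 := by
    rwa [ENNReal.ofReal_lt_ofReal_iff (by linarith)] at hδlt
  obtain ⟨r0, hr0, hnear⟩ := Metric.eventually_nhds_iff.mp hev
  refine ⟨ρ/16, by linarith, ?_⟩
  by_contra hcon
  rw [Filter.not_eventually] at hcon
  set F := (f xbar).toReal with hFdef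
  have hfx : f xbar = (F : EReal) := (EReal.coe_toReal hfin (hbot xbar)).symm
  -- construct the sequence
  have hstep : ∀ n : ℕ, ∃ y : X, y ≠ xbar ∧ dist y xbar ≤ 2/(n+1) ∧
      slopeM f y ≤ ENNReal.ofReal (ρ/2) ∧
      ((F - 2*c/(n+1) : ℝ) : EReal) ≤ f y ∧ f y ≤ ((F + ρ/16/(n+1) : ℝ) : EReal) := by
    intro n
    set r : ℝ := min (r0/2) (min 1 (1/(n+1))) with hrdef
    have hrpos : 0 < r := by
      refine lt_min (by linarith) (lt_min one_pos (by positivity))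
    obtain ⟨z, hzlt, hzr⟩ :=
      (hcon.and_eventually (Metric.ball_mem_nhds xbar hrpos)).exists
    have hz : f z < f xbar + ((ρ/16 * dist z xbar : ℝ) : EReal) := not_le.mp hzlt
    have hzne : z ≠ xbar := by
      rintro rfl
      rw [dist_self, mul_zero] at hz
      simp only [EReal.coe_zero, add_zero] at hz
      exact absurd hz (lt_irrefl _)
    have ht0 : 0 < dist z xbar := dist_pos.mpr hzne
    have ht1 : dist z xbar < r0/2 := lt_of_lt_of_le hzr (min_le_left _ _)
    have ht2 : dist z xbar ≤ 1 :=
      le_of_lt (lt_of_lt_of_le hzr ((min_le_right _ _).trans (min_le_left _ _)))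
    have htn : dist z xbar ≤ 1/(n+1) :=
      le_of_lt (lt_of_lt_of_le hzr ((min_le_right _ _).trans (min_le_right _ _)))
    obtain ⟨y, hy1, hy2, hy3, hy4, hy5⟩ := ekeland_step f hlsc hbot xbar hfin ρ c r0
      hρpos hρ1 hc hcρ hr0 hnear z ht0 ht1 ht2 hz
    have h2 : 2/((n:ℝ)+1) = 2*(1/((n:ℝ)+1)) := by ring
    refine ⟨y, hy1, by linarith, hy3, ?_, ?_⟩
    · refine le_trans ?_ hy4
      rw [EReal.coe_le_coe_iff]
      have : c * dist z xbar ≤ c * (1/(n+1)) := by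
        apply mul_le_mul_of_nonneg_left htn (le_of_lt hc)
      have h1 : 2*c/(n+1) = 2*(c*(1/(n+1))) := by ring
      nlinarith
    · refine le_trans hy5 ?_
      rw [EReal.coe_le_coe_iff]
      have : ρ/16 * dist z xbar ≤ ρ/16 * (1/(n+1)) :=
        mul_le_mul_of_nonneg_left htn (by linarith)
      have h1 : ρ/16/(n+1) = ρ/16*(1/(n+1)) := by ring
      linarith
  choose y hy1 hy2 hy3 hy4 hy5 using hstep
  -- y tends to xbar
  have hdtend : Tendsto (fun n : ℕ => dist (y n) xbar) atTop (𝓝 0) := by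
    apply squeeze_zero (fun n => dist_nonneg) hy2
    have h1 : Tendsto (fun n : ℕ => 2 * (1/(n+1) : ℝ)) atTop (𝓝 (2 * 0)) :=
      tendsto_one_div_add_atTop_nhds_zero_nat.const_mul 2
    rw [mul_zero] at h1
    convert h1 using 2 with n
    ring
  have htendy : Tendsto y atTop (𝓝 xbar) := by
    rw [tendsto_iff_dist_tendsto_zero]
    exact hdtend
  -- f (y n) tends to f xbar
  have hftend : Tendsto (fun n => f (y n)) atTop (𝓝 (f xbar)) := by
    rw [hfx]
    have hlo : Tendsto (fun n : ℕ => ((F - 2*c/(n+1) : ℝ) : EReal)) atTop (𝓝 (F : EReal)) := by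
      rw [EReal.tendsto_coe]
      have h1 : Tendsto (fun n : ℕ => F - 2*c * (1/(n+1) : ℝ)) atTop (𝓝 (F - 2*c*0)) :=
        tendsto_const_nhds.sub (tendsto_one_div_add_atTop_nhds_zero_nat.const_mul (2*c))
      rw [mul_zero, sub_zero] at h1
      convert h1 using 2 with n
      ring
    have hhi : Tendsto (fun n : ℕ => ((F + ρ/16/(n+1) : ℝ) : EReal)) atTop (𝓝 (F : EReal)) := by
      rw [EReal.tendsto_coe]
      have h1 : Tendsto (fun n : ℕ => F + ρ/16 * (1/(n+1) : ℝ)) atTop (𝓝 (F + ρ/16*0)) :=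
        tendsto_const_nhds.add (tendsto_one_div_add_atTop_nhds_zero_nat.const_mul (ρ/16))
      rw [mul_zero, add_zero] at h1
      convert h1 using 2 with n
      ring
    exact tendsto_of_tendsto_of_tendsto_of_le_of_le hlo hhi hy4 hy5
  have hL : Tendsto y atTop (𝓝[({xbar} : Set X)ᶜ] xbar ⊓ Filter.comap f (𝓝 (f xbar))) := by
    rw [tendsto_inf]
    constructor
    · apply tendsto_nhdsWithin_of_tendsto_nhds_of_eventually_within _ htendy
      exact Eventually.of_forall fun n => by simp [hy1 n]
    · rw [tendsto_comap_iff]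
      exact hftend
  have hev2 : ∀ᶠ w in 𝓝[({xbar} : Set X)ᶜ] xbar ⊓ Filter.comap f (𝓝 (f xbar)),
      ENNReal.ofReal ρ < slopeM f w := by
    rw [identModulus] at hρκ
    exact eventually_lt_of_lt_liminf hρκ
  obtain ⟨n, hn⟩ := (hL.eventually hev2).exists
  have := hy3 n
  have hhalf : ENNReal.ofReal (ρ/2) < ENNReal.ofReal ρ :=
    (ENNReal.ofReal_lt_ofReal_iff hρpos).mpr (by linarith)
  exact absurd (lt_of_le_of_lt this hhalf) (not_lt.mpr hn.le)
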